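/- If Ŷ is a Pareto maximal decision, then there exists τ ∈ [0,1] such that Ŷ agrees μ-almost everywhere with the threshold-τ decision on p, i.e., for μ-almost every x, Ŷ(x) = 1 if p(x) > τ and Ŷ(x) = 0 otherwise. -/

import Mathlib

open MeasureTheory

/-- Fair true positive rate of a decision `Y` w.r.t. probabilities `p`. -/
noncomputable def TPR {X : Type*} [MeasurableSpace X] (μ : Measure X)
    (p Y : X → ℝ) : ℝ :=
  (∫ x, Y x * p x ∂μ) / (∫ x, p x ∂μ)

/-- Fair true negative rate of a decision `Y` w.r.t. probabilities `p`. -/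
noncomputable def TNR {X : Type*} [MeasurableSpace X] (μ : Measure X)
    (p Y : X → ℝ) : ℝ :=
  (∫ x, (1 - Y x) * (1 - p x) ∂μ) / (∫ x, (1 - p x) ∂μ)

private lemma int_bdd {X : Type*} [MeasurableSpace X] (μ : Measure X)
    [IsProbabilityMeasure μ] {f : X → ℝ} (hf : Measurable f) (C : ℝ)
    (h : ∀ x, |f x| ≤ C) : Integrable f μ :=
  (integrable_const C).mono' hf.aestronglyMeasurable
    (Filter.Eventually.of_forall (by simpa using h))

/-- every Pareto maximal decision agrees `μ`-a.e. with a
threshold decision on `p`. -/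
theorem pareto_maximal_is_threshold_decision
    {X : Type*} [MeasurableSpace X] (μ : Measure X) [IsProbabilityMeasure μ]
    (p : X → ℝ) (hp : Measurable p) (hp01 : ∀ x, p x ∈ Set.Icc (0 : ℝ) 1)
    (hppos : 0 < ∫ x, p x ∂μ) (hplt : (∫ x, p x ∂μ) < 1)
    (hpAtomless : ∀ c : ℝ, μ.map p {c} = 0)
    (Y : X → ℝ) (hY : Measurable Y) (hY01 : ∀ x, Y x = 0 ∨ Y x = 1)
    (hmax : ∀ Y' : X → ℝ, Measurable Y' → (∀ x, Y' x = 0 ∨ Y' x = 1) →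
      (TPR μ p Y' ≥ TPR μ p Y ∧ TNR μ p Y' ≥ TNR μ p Y) →
      (TPR μ p Y ≥ TPR μ p Y' ∧ TNR μ p Y ≥ TNR μ p Y')) :
    ∃ τ ∈ Set.Icc (0 : ℝ) 1,
      Y =ᵐ[μ] (fun x => if τ < p x then (1 : ℝ) else 0) := by
  have hp0 : ∀ x, 0 ≤ p x := fun x => (hp01 x).1
  have hp1 : ∀ x, p x ≤ 1 := fun x => (hp01 x).2
  have hY0 : ∀ x, 0 ≤ Y x := fun x => by rcases hY01 x with h | h <;> simp [h]
  have hY1 : ∀ x, Y x ≤ 1 := fun x => by rcases hY01 x with h | h <;> simp [h]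
  -- level sets of `p` are null
  have hlevel : ∀ c : ℝ, μ {x | p x = c} = 0 := by
    intro c
    have h1 : μ (p ⁻¹' {c}) = 0 := by
      rw [← Measure.map_apply hp (measurableSet_singleton c)]
      exact hpAtomless c
    simpa [Set.preimage, Set.mem_singleton_iff] using h1
  -- the function G
  set G : ℝ → ℝ := fun s => ∫ x, (if s < p x then p x else 0) ∂μ with hGdef
  have hFm : ∀ s : ℝ, Measurable (fun x => if s < p x then p x else 0) := fun s =>
    Measurable.ite (measurableSet_lt measurable_const hp) hp measurable_const
  -- continuity of G
  have hGcont : Continuous G := by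
    rw [continuous_iff_continuousAt]
    intro t
    apply continuousAt_of_dominated (bound := fun _ => (1 : ℝ))
    · exact Filter.Eventually.of_forall fun s => (hFm s).aestronglyMeasurable
    · refine Filter.Eventually.of_forall fun s => Filter.Eventually.of_forall fun x => ?_
      simp only [Real.norm_eq_abs]
      split_ifs with h
      · rw [abs_of_nonneg (hp0 x)]; exact hp1 x
      · simp
    · exact integrable_const 1
    · have hne : ∀ᵐ x ∂μ, p x ≠ t := by
        rw [Filter.eventually_iff, mem_ae_iff]
        have : {x | p x ≠ t}ᶜ = {x | p x = t} := by ext x; simp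
        rw [this]; exact hlevel t
      refine hne.mono fun x hx => ?_
      rcases lt_or_gt_of_ne hx with h | h
      · -- p x < t : eventually ¬ (s < p x), value 0
        have hev : ∀ᶠ s in nhds t, s ∈ Set.Ioi (p x) := isOpen_Ioi.eventually_mem h
        exact continuousAt_const.congr
          (hev.mono fun s hs => (if_neg (not_lt.mpr (le_of_lt hs))).symm)
      · -- t < p x : eventually s < p x, value p x
        have hev : ∀ᶠ s in nhds t, s ∈ Set.Iio (p x) := isOpen_Iio.eventually_mem h
        exact continuousAt_const.congr (hev.mono fun s hs => (if_pos hs).symm)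
  -- endpoint values
  have hG1 : G 1 = 0 := by
    have h1 : ∀ x, (if (1:ℝ) < p x then p x else 0) = 0 := fun x =>
      if_neg (not_lt.mpr (hp1 x))
    simp only [hGdef]
    rw [show (fun x => if (1:ℝ) < p x then p x else 0) = fun _ => (0:ℝ) from funext h1]
    simp
  have hG0 : G 0 = ∫ x, p x ∂μ := by
    have h0 : ∀ x, (if (0:ℝ) < p x then p x else 0) = p x := fun x => by
      rcases (hp0 x).lt_or_eq with h | h
      · exact if_pos h
      · simp [← h]
    simp only [hGdef]
    rw [show (fun x => if (0:ℝ) < p x then p x else 0) = fun x => p x from funext h0]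
  -- integrability facts
  have hpInt : Integrable p μ := int_bdd μ hp 1 fun x =>
    abs_le.mpr ⟨by linarith [hp0 x], hp1 x⟩
  have hYInt : Integrable Y μ := int_bdd μ hY 1 fun x =>
    abs_le.mpr ⟨by linarith [hY0 x], hY1 x⟩
  have hYpInt : Integrable (fun x => Y x * p x) μ :=
    int_bdd μ (hY.mul hp) 1 fun x => by
      rw [abs_mul]
      exact mul_le_one₀ (abs_le.mpr ⟨by linarith [hY0 x], hY1 x⟩) (abs_nonneg _)
        (abs_le.mpr ⟨by linarith [hp0 x], hp1 x⟩)
  -- value a and IVT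
  set a : ℝ := ∫ x, Y x * p x ∂μ with ha_def
  have ha0 : 0 ≤ a := integral_nonneg fun x => mul_nonneg (hY0 x) (hp0 x)
  have haI : a ≤ ∫ x, p x ∂μ :=
    integral_mono hYpInt hpInt fun x => by
      have := mul_le_of_le_one_left (hp0 x) (hY1 x); simpa using this
  obtain ⟨τ, hτmem, hGτ⟩ :=
    intermediate_value_Icc' (by norm_num : (0:ℝ) ≤ 1) hGcont.continuousOn
      (by rw [hG1, hG0]; exact ⟨ha0, haI⟩ : a ∈ Set.Icc (G 1) (G 0))
  refine ⟨τ, hτmem, ?_⟩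
  set T : X → ℝ := fun x => if τ < p x then (1:ℝ) else 0 with hTdef
  have hTm : Measurable T :=
    Measurable.ite (measurableSet_lt measurable_const hp) measurable_const measurable_const
  have hT01 : ∀ x, T x = 0 ∨ T x = 1 := fun x => by
    by_cases h : τ < p x <;> simp [hTdef, h]
  have hT0 : ∀ x, 0 ≤ T x := fun x => by rcases hT01 x with h | h <;> simp [h]
  have hT1 : ∀ x, T x ≤ 1 := fun x => by rcases hT01 x with h | h <;> simp [h]
  have hTInt : Integrable T μ := int_bdd μ hTm 1 fun x =>
    abs_le.mpr ⟨by linarith [hT0 x], hT1 x⟩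
  have hTpInt : Integrable (fun x => T x * p x) μ :=
    int_bdd μ (hTm.mul hp) 1 fun x => by
      rw [abs_mul]
      exact mul_le_one₀ (abs_le.mpr ⟨by linarith [hT0 x], hT1 x⟩) (abs_nonneg _)
        (abs_le.mpr ⟨by linarith [hp0 x], hp1 x⟩)
  have hTYInt : Integrable (fun x => T x - Y x) μ := hTInt.sub hYInt
  -- T has the same TPR numerator as Y
  have hTp : ∫ x, T x * p x ∂μ = a := by
    rw [← hGτ]
    simp only [hGdef]
    refine integral_congr_ae (Filter.Eventually.of_forall fun x => ?_)
    by_cases h : τ < p x <;> simp [hTdef, h]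
  -- key expansion for E := ∫ (T - Y)(p - τ)
  have key : ∫ x, (T x - Y x) * (p x - τ) ∂μ
      = (∫ x, T x * p x ∂μ) - (∫ x, Y x * p x ∂μ)
        - τ * ∫ x, (T x - Y x) ∂μ := by
    rw [show (fun x => (T x - Y x) * (p x - τ))
        = fun x => (T x * p x - Y x * p x) - τ * (T x - Y x) from
      funext fun x => by ring]
    have h1 : Integrable (fun x => T x * p x - Y x * p x) μ := hTpInt.sub hYpInt
    have h2 : Integrable (fun x => τ * (T x - Y x)) μ := hTYInt.const_mul τ
    rw [integral_sub h1 h2, integral_sub hTpInt hYpInt, integral_const_mul]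
  have hEnn : ∀ x, 0 ≤ (T x - Y x) * (p x - τ) := fun x => by
    by_cases h : τ < p x
    · have hTx : T x = 1 := if_pos h
      have := hY1 x; nlinarith
    · have hTx : T x = 0 := if_neg h
      push_neg at h
      have := hY0 x; nlinarith
  have hEInt : Integrable (fun x => (T x - Y x) * (p x - τ)) μ :=
    int_bdd μ ((hTm.sub hY).mul (hp.sub measurable_const)) 1 fun x => by
      rw [abs_mul]
      refine mul_le_one₀ (abs_le.mpr ⟨by linarith [hT0 x, hY1 x], by linarith [hT1 x, hY0 x]⟩)
        (abs_nonneg _)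
        (abs_le.mpr ⟨by linarith [hp0 x, hτmem.2], by linarith [hp1 x, hτmem.1]⟩)
  have hEnonneg : 0 ≤ ∫ x, (T x - Y x) * (p x - τ) ∂μ := integral_nonneg hEnn
  have hτS : τ * (∫ x, (T x - Y x) ∂μ) ≤ 0 := by
    rw [key, hTp, ← ha_def] at hEnonneg
    linarith
  -- S ≤ 0
  have hS : (∫ x, (T x - Y x) ∂μ) ≤ 0 := by
    rcases hτmem.1.lt_or_eq with hτpos | hτ0
    · nlinarith
    · -- τ = 0
      have ha : a = ∫ x, p x ∂μ := by rw [← hGτ, ← hτ0, hG0]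
      have h1YpInt : Integrable (fun x => (1 - Y x) * p x) μ :=
        int_bdd μ ((measurable_const.sub hY).mul hp) 1 fun x => by
          rw [abs_mul]
          exact mul_le_one₀ (abs_le.mpr ⟨by linarith [hY1 x], by linarith [hY0 x]⟩)
            (abs_nonneg _) (abs_le.mpr ⟨by linarith [hp0 x], hp1 x⟩)
      have hz : ∫ x, (1 - Y x) * p x ∂μ = 0 := by
        rw [show (fun x => (1 - Y x) * p x) = fun x => p x - Y x * p x from
          funext fun x => by ring, integral_sub hpInt hYpInt, ← ha_def, ha]
        ring
      have hae : (fun x => (1 - Y x) * p x) =ᵐ[μ] 0 :=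
        (integral_eq_zero_iff_of_nonneg
          (fun x => mul_nonneg (by linarith [hY1 x]) (hp0 x)) h1YpInt).mp hz
      apply integral_nonpos_of_ae
      refine hae.mono fun x hx => ?_
      simp only [Pi.zero_apply] at hx
      by_cases h : τ < p x
      · have hTx : T x = 1 := if_pos h
        have hYx : Y x = 1 := by
          rcases mul_eq_zero.mp hx with h' | h'
          · linarith
          · exfalso; rw [← hτ0] at h; linarith
        simp [hTx, hYx]
      · have hTx : T x = 0 := if_neg h
        simp only [hTx]
        have := hY0 x; simp; linarith
  -- TNR numerators
  have hNTInt : Integrable (fun x => (1 - T x) * (1 - p x)) μ :=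
    int_bdd μ ((measurable_const.sub hTm).mul (measurable_const.sub hp)) 1 fun x => by
      rw [abs_mul]
      exact mul_le_one₀ (abs_le.mpr ⟨by linarith [hT1 x], by linarith [hT0 x]⟩)
        (abs_nonneg _) (abs_le.mpr ⟨by linarith [hp1 x], by linarith [hp0 x]⟩)
  have hNYInt : Integrable (fun x => (1 - Y x) * (1 - p x)) μ :=
    int_bdd μ ((measurable_const.sub hY).mul (measurable_const.sub hp)) 1 fun x => by
      rw [abs_mul]
      exact mul_le_one₀ (abs_le.mpr ⟨by linarith [hY1 x], by linarith [hY0 x]⟩)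
        (abs_nonneg _) (abs_le.mpr ⟨by linarith [hp1 x], by linarith [hp0 x]⟩)
  have hNdiff : (∫ x, (1 - T x) * (1 - p x) ∂μ) - (∫ x, (1 - Y x) * (1 - p x) ∂μ)
      = -((∫ x, (T x - Y x) ∂μ) - ((∫ x, T x * p x ∂μ) - (∫ x, Y x * p x ∂μ))) := by
    rw [← integral_sub hNTInt hNYInt]
    rw [show (fun x => (1 - T x) * (1 - p x) - (1 - Y x) * (1 - p x))
        = fun x => -((T x - Y x) - (T x * p x - Y x * p x)) from
      funext fun x => by ring]
    have h1 : Integrable (fun x => T x * p x - Y x * p x) μ := hTpInt.sub hYpInt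
    rw [integral_neg, integral_sub hTYInt h1, integral_sub hTpInt hYpInt]
  have hNle : (∫ x, (1 - Y x) * (1 - p x) ∂μ) ≤ ∫ x, (1 - T x) * (1 - p x) ∂μ := by
    rw [← sub_nonneg, hNdiff, hTp, ← ha_def]
    linarith
  -- denominator positivity
  have hJ : 0 < ∫ x, (1 - p x) ∂μ := by
    rw [integral_sub (integrable_const 1) hpInt]
    simp only [integral_const, measure_univ, probReal_univ, smul_eq_mul, one_mul]
    linarith
  -- apply maximality to T
  have hTPReq : TPR μ p T = TPR μ p Y := by
    unfold TPR; rw [hTp, ← ha_def]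
  have hTNRge : TNR μ p T ≥ TNR μ p Y := by
    unfold TNR
    exact div_le_div_of_nonneg_right hNle hJ.le
  obtain ⟨-, h2⟩ := hmax T hTm hT01 ⟨ge_of_eq hTPReq, hTNRge⟩
  -- TNR equality forces numerator equality
  have hTNReq : TNR μ p T = TNR μ p Y := le_antisymm h2 hTNRge
  have hNeq : (∫ x, (1 - T x) * (1 - p x) ∂μ) = ∫ x, (1 - Y x) * (1 - p x) ∂μ := by
    have h := hTNReq
    unfold TNR at h
    field_simp [hJ.ne'] at h
    linarith
  -- hence S = 0
  have hS0 : (∫ x, (T x - Y x) ∂μ) = 0 := by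
    have := hNdiff
    rw [hNeq, hTp, ← ha_def] at this
    linarith
  -- hence E = 0, so the nonneg integrand vanishes a.e.
  have hE0 : ∫ x, (T x - Y x) * (p x - τ) ∂μ = 0 := by
    rw [key, hTp, ← ha_def, hS0]; ring
  have hEae : (fun x => (T x - Y x) * (p x - τ)) =ᵐ[μ] 0 :=
    (integral_eq_zero_iff_of_nonneg hEnn hEInt).mp hE0
  have hpτ : ∀ᵐ x ∂μ, p x ≠ τ := by
    rw [Filter.eventually_iff, mem_ae_iff]
    have : {x | p x ≠ τ}ᶜ = {x | p x = τ} := by ext x; simp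
    rw [this]; exact hlevel τ
  filter_upwards [hEae, hpτ] with x hx hxτ
  simp only [Pi.zero_apply] at hx
  rcases mul_eq_zero.mp hx with h | h
  · have : Y x = T x := by linarith
    simpa [hTdef] using this
  · exact absurd (by linarith : p x = τ) hxτ
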